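/- Let A be a finite type, let x, y : A → ℝ, let 0 < ε < 1 and 0 < δ < 1, and let t be a positive integer with t ≥ (2/ε²) · ln(2/δ). Let (Ω, P) be a probability space and let h⁽¹⁾, …, h⁽ᵗ⁾ : Ω → (A → ℝ) be mutually independent random functions such that for every i and every a ∈ A, h⁽ⁱ⁾(a)² = 1 almost surely, and for every i and every pair of distinct a, b ∈ A, E[h⁽ⁱ⁾(a) · h⁽ⁱ⁾(b)] = 0. Define x̂ᵢ = (1/√t) · ∑_{a ∈ A} x(a) · h⁽ⁱ⁾(a) and ŷᵢ = (1/√t) · ∑_{a ∈ A} y(a) · h⁽ⁱ⁾(a), and write ‖x‖₁ = ∑_{a ∈ A} |x(a)| and ‖y‖₁ = ∑_{a ∈ A} |y(a)|. Then P[|∑_{i=1}^{t} x̂ᵢ · ŷᵢ − ∑_{a ∈ A} x(a) · y(a)| ≤ ε · ‖x‖₁ · ‖y‖₁] ≥ 1 − δ. -/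

import Mathlib

open MeasureTheory ProbabilityTheory

lemma hoeffding_core (p u : ℝ) (hp0 : 0 ≤ p) (hp1 : p ≤ 1) :
    1 - p + p * Real.exp u ≤ Real.exp (p * u + u ^ 2 / 8) := by
  set D : ℝ → ℝ := fun v => 1 - p + p * Real.exp v with hDdef
  have hDpos : ∀ v, 0 < D v := by
    intro v
    rcases eq_or_lt_of_le hp0 with hp | hp
    · simp [hDdef, ← hp]
    · have : 0 < p * Real.exp v := mul_pos hp (Real.exp_pos v)
      have : 0 ≤ 1 - p := by linarith
      simp only [hDdef]; nlinarith
  have hD : ∀ v, HasDerivAt D (p * Real.exp v) v := by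
    intro v
    exact ((Real.hasDerivAt_exp v).const_mul p).const_add (1 - p)
  set g : ℝ → ℝ := fun v => p * v + v ^ 2 / 8 - Real.log (D v) with hgdef
  set g' : ℝ → ℝ := fun v => p + v / 4 - p * Real.exp v / D v with hg'def
  have hg : ∀ v, HasDerivAt g (g' v) v := by
    intro v
    have h1 : HasDerivAt (fun v : ℝ => p * v + v ^ 2 / 8) (p + 2 * v / 8) v := by
      have := ((hasDerivAt_pow 2 v).div_const 8).const_add 0
      have h2 := ((hasDerivAt_id v).const_mul p).add ((hasDerivAt_pow 2 v).div_const 8)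
      refine h2.congr_deriv ?_; ring
    have h2 : HasDerivAt (fun v => Real.log (D v)) (p * Real.exp v / D v) v :=
      (hD v).log (hDpos v).ne'
    have := h1.sub h2
    refine this.congr_deriv ?_
    simp only [hg'def]; ring
  have hg' : ∀ v, HasDerivAt g' (1 / 4 - p * Real.exp v * (1 - p) / (D v) ^ 2) v := by
    intro v
    have h1 : HasDerivAt (fun v : ℝ => p + v / 4) (1 / 4) v := by
      simpa using ((hasDerivAt_id v).div_const 4).const_add p
    have h2 : HasDerivAt (fun v => p * Real.exp v / D v)
        ((p * Real.exp v * D v - p * Real.exp v * (p * Real.exp v)) / (D v) ^ 2) v :=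
      ((Real.hasDerivAt_exp v).const_mul p).div (hD v) (hDpos v).ne'
    have := h1.sub h2
    refine this.congr_deriv ?_
    have hDv : D v = 1 - p + p * Real.exp v := rfl
    field_simp
    ring
  have hg'nonneg : ∀ v, 0 ≤ 1 / 4 - p * Real.exp v * (1 - p) / (D v) ^ 2 := by
    intro v
    have hDv : (0:ℝ) < (D v) ^ 2 := pow_pos (hDpos v) 2
    have h1 : p * Real.exp v * (1 - p) / (D v) ^ 2 ≤ 1 / 4 := by
      rw [div_le_iff₀ hDv]
      have hDe : D v = 1 - p + p * Real.exp v := rfl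
      nlinarith [sq_nonneg (1 - p - p * Real.exp v)]
    linarith
  have hg'mono : Monotone g' :=
    monotone_of_hasDerivAt_nonneg hg' (fun v => hg'nonneg v)
  have hg'zero : g' 0 = 0 := by
    simp only [hg'def, hDdef]
    simp
  have hgnonneg : ∀ v, 0 ≤ g v := by
    have hg0 : g 0 = 0 := by simp [hgdef, hDdef]
    intro v
    rcases le_total 0 v with hv | hv
    · have hmono : MonotoneOn g (Set.Ici 0) := by
        apply monotoneOn_of_hasDerivWithinAt_nonneg (convex_Ici 0)
          (Continuous.continuousOn (by
            fun_prop (disch := exact fun v => (hDpos v).ne')))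
          (f' := g') (fun v _ => (hg v).hasDerivWithinAt)
        intro v hv'
        rw [interior_Ici] at hv'
        have := hg'mono (le_of_lt hv')
        rw [hg'zero] at this
        linarith [this]
      have := hmono (Set.self_mem_Ici) (Set.mem_Ici.2 hv) hv
      rwa [hg0] at this
    · have hanti : AntitoneOn g (Set.Iic 0) := by
        apply antitoneOn_of_hasDerivWithinAt_nonpos (convex_Iic 0)
          (Continuous.continuousOn (by
            fun_prop (disch := exact fun v => (hDpos v).ne')))
          (f' := g') (fun v _ => (hg v).hasDerivWithinAt)
        intro v hv'
        rw [interior_Iic] at hv'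
        have := hg'mono (le_of_lt hv')
        rw [hg'zero] at this
        linarith [this]
      have := hanti (Set.mem_Iic.2 hv) (Set.self_mem_Iic) hv
      rwa [hg0] at this
  have hlog : Real.log (D u) ≤ p * u + u ^ 2 / 8 := by
    have := hgnonneg u
    simp only [hgdef] at this
    linarith
  calc 1 - p + p * Real.exp u = Real.exp (Real.log (D u)) := by
        rw [Real.exp_log (hDpos u)]
    _ ≤ Real.exp (p * u + u ^ 2 / 8) := Real.exp_le_exp.2 hlog

lemma hoeffding_mgf {Ω : Type*} [MeasurableSpace Ω] (P : Measure Ω) [IsProbabilityMeasure P]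
    (X : Ω → ℝ) (hX : Measurable X) (a b s : ℝ)
    (hbound : ∀ᵐ ω ∂P, X ω ∈ Set.Icc a b) (hmean : ∫ ω, X ω ∂P = 0) :
    mgf X P s ≤ Real.exp (s ^ 2 * (b - a) ^ 2 / 8) := by
  have hPne : (P : Measure Ω) ≠ 0 := IsProbabilityMeasure.ne_zero P
  haveI : (MeasureTheory.ae P).NeBot := ae_neBot.2 hPne
  obtain ⟨ω₀, hω₀⟩ := hbound.exists
  have hab : a ≤ b := le_trans hω₀.1 hω₀.2
  -- integrability of X
  have hXint : Integrable X P := by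
    refine (integrable_const (max |a| |b|)).mono' hX.aestronglyMeasurable ?_
    filter_upwards [hbound] with ω hω
    exact abs_le_max_abs_abs hω.1 hω.2
  have ha0 : a ≤ 0 := by
    have h1 : ∫ _ω, a ∂P ≤ ∫ ω, X ω ∂P :=
      integral_mono_ae (integrable_const a) hXint (by filter_upwards [hbound] with ω hω using hω.1)
    simpa [hmean] using h1
  have hb0 : 0 ≤ b := by
    have h1 : ∫ ω, X ω ∂P ≤ ∫ _ω, b ∂P :=
      integral_mono_ae hXint (integrable_const b) (by filter_upwards [hbound] with ω hω using hω.2)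
    simpa [hmean] using h1
  rcases eq_or_lt_of_le hab with heq | hlt
  · -- a = b, so a = 0 = b and X = 0 a.e.
    have ha : a = 0 := le_antisymm ha0 (heq ▸ hb0)
    have hb : b = 0 := by rw [← heq, ha]
    have hXzero : ∀ᵐ ω ∂P, X ω = 0 := by
      filter_upwards [hbound] with ω hω
      rw [ha] at hω; rw [hb] at hω
      exact le_antisymm hω.2 hω.1
    have : mgf X P s = 1 := by
      unfold mgf
      rw [integral_congr_ae (g := fun _ => (1:ℝ)) ?_]
      · simp
      · filter_upwards [hXzero] with ω hω; simp [hω]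
    rw [this]
    exact Real.one_le_exp (by positivity)
  · -- main case a < b
    set p : ℝ := -a / (b - a) with hpdef
    have hba : (0:ℝ) < b - a := by linarith
    have hp0 : 0 ≤ p := div_nonneg (by linarith) hba.le
    have hp1 : p ≤ 1 := by
      rw [div_le_one hba]; linarith
    -- pointwise convexity bound
    have hpt : ∀ c ∈ Set.Icc a b, Real.exp (s * c) ≤
        (b - c) / (b - a) * Real.exp (s * a) + (c - a) / (b - a) * Real.exp (s * b) := by
      intro c hc
      set θ : ℝ := (c - a) / (b - a) with hθdef
      have hθ0 : 0 ≤ θ := div_nonneg (by linarith [hc.1]) hba.le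
      have hθ1 : θ ≤ 1 := by rw [div_le_one hba]; linarith [hc.2]
      have h1θ : (b - c) / (b - a) = 1 - θ := by rw [hθdef]; field_simp; try ring
      have hcomb : s * c = (1 - θ) * (s * a) + θ * (s * b) := by
        have : c = (1 - θ) * a + θ * b := by
          rw [hθdef]; field_simp; ring
        rw [this]; ring
      rw [hcomb, h1θ]
      have := convexOn_exp.2 (Set.mem_univ (s * a)) (Set.mem_univ (s * b))
        (by linarith : (0:ℝ) ≤ 1 - θ) hθ0 (by ring)
      simpa [smul_eq_mul] using this
    -- integrability of exp (s * X)
    have hexpint : Integrable (fun ω => Real.exp (s * X ω)) P := by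
      refine (integrable_const (Real.exp (|s| * max |a| |b|))).mono'
        ((hX.const_mul s).exp).aestronglyMeasurable ?_
      filter_upwards [hbound] with ω hω
      rw [Real.norm_eq_abs, abs_of_nonneg (Real.exp_pos _).le]
      apply Real.exp_le_exp.2
      calc s * X ω ≤ |s * X ω| := le_abs_self _
        _ = |s| * |X ω| := abs_mul _ _
        _ ≤ |s| * max |a| |b| := by
            exact mul_le_mul_of_nonneg_left (abs_le_max_abs_abs hω.1 hω.2) (abs_nonneg s)
    -- integral bound
    set E1 : ℝ := Real.exp (s * a) with hE1
    set E2 : ℝ := Real.exp (s * b) with hE2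
    set c1 : ℝ := (b * E1 - a * E2) / (b - a) with hc1
    set c2 : ℝ := (E2 - E1) / (b - a) with hc2
    have hφeq : ∀ ω, (b - X ω) / (b - a) * E1 + (X ω - a) / (b - a) * E2
        = c1 + c2 * X ω := by
      intro ω
      rw [hc1, hc2]
      field_simp
      ring
    have hφint : Integrable (fun ω => c1 + c2 * X ω) P :=
      (integrable_const c1).add (hXint.const_mul c2)
    have hmgf1 : mgf X P s ≤ (1 - p) * E1 + p * E2 := by
      have h1 : mgf X P s ≤ ∫ ω, (c1 + c2 * X ω) ∂P := by
        apply integral_mono_ae hexpint hφint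
        filter_upwards [hbound] with ω hω
        rw [← hφeq ω]
        exact hpt (X ω) hω
      have h2 : ∫ ω, (c1 + c2 * X ω) ∂P = c1 := by
        rw [integral_add (integrable_const c1) (hXint.const_mul c2),
          MeasureTheory.integral_const_mul, hmean, integral_const]
        simp
      have h3 : c1 = (1 - p) * E1 + p * E2 := by
        rw [hc1, hpdef]
        field_simp
        ring
      rw [h2, h3] at h1
      exact h1
    -- apply core inequality
    set u : ℝ := s * (b - a) with hudef
    have hcore := hoeffding_core p u hp0 hp1
    have hsb : Real.exp (s * b) = Real.exp (s * a) * Real.exp u := by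
      rw [← Real.exp_add]; congr 1; rw [hudef]; ring
    have h3 : (1 - p) * Real.exp (s * a) + p * Real.exp (s * b)
        = Real.exp (s * a) * (1 - p + p * Real.exp u) := by
      rw [hsb]; ring
    have h4 : Real.exp (s * a) * (1 - p + p * Real.exp u)
        ≤ Real.exp (s * a) * Real.exp (p * u + u ^ 2 / 8) :=
      mul_le_mul_of_nonneg_left hcore (Real.exp_pos _).le
    have h5 : Real.exp (s * a) * Real.exp (p * u + u ^ 2 / 8)
        = Real.exp (s ^ 2 * (b - a) ^ 2 / 8) := by
      rw [← Real.exp_add]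
      congr 1
      have hpu : p * u = -a * s := by
        rw [hpdef, hudef]; field_simp
      rw [hpu, hudef]; ring
    calc mgf X P s ≤ (1 - p) * Real.exp (s * a) + p * Real.exp (s * b) := hmgf1
      _ = Real.exp (s * a) * (1 - p + p * Real.exp u) := h3
      _ ≤ Real.exp (s * a) * Real.exp (p * u + u ^ 2 / 8) := h4
      _ = Real.exp (s ^ 2 * (b - a) ^ 2 / 8) := h5

lemma chernoff_sum {Ω : Type*} [MeasurableSpace Ω] (P : Measure Ω) [IsProbabilityMeasure P]
    (n : ℕ) (Y : Fin n → Ω → ℝ) (hYmeas : ∀ i, Measurable (Y i))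
    (hindep : iIndepFun Y P)
    (a b : ℝ) (hbound : ∀ i, ∀ᵐ ω ∂P, Y i ω ∈ Set.Icc a b)
    (hmean : ∀ i, ∫ ω, Y i ω ∂P = 0)
    (ε₀ s : ℝ) (hs : 0 ≤ s) :
    (P {ω | ε₀ ≤ ∑ i, Y i ω}).toReal
      ≤ Real.exp (-s * ε₀ + n * (s ^ 2 * (b - a) ^ 2 / 8)) := by
  have hint : ∀ i, Integrable (fun ω => Real.exp (s * Y i ω)) P := by
    intro i
    refine (integrable_const (Real.exp (|s| * max |a| |b|))).mono'
      ((hYmeas i).const_mul s).exp.aestronglyMeasurable ?_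
    filter_upwards [hbound i] with ω hω
    rw [Real.norm_eq_abs, abs_of_nonneg (Real.exp_pos _).le]
    apply Real.exp_le_exp.2
    calc s * Y i ω ≤ |s * Y i ω| := le_abs_self _
      _ = |s| * |Y i ω| := abs_mul _ _
      _ ≤ |s| * max |a| |b| :=
          mul_le_mul_of_nonneg_left (abs_le_max_abs_abs hω.1 hω.2) (abs_nonneg s)
  have hsumint : Integrable (fun ω => Real.exp (s * (∑ i, Y i) ω)) P :=
    hindep.integrable_exp_mul_sum hYmeas (fun i _ => hint i)
  have hset : {ω | ε₀ ≤ ∑ i, Y i ω} = {ω | ε₀ ≤ (∑ i, Y i) ω} := by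
    ext ω; simp [Finset.sum_apply]
  have h1 := measure_ge_le_exp_mul_mgf (X := ∑ i, Y i) (μ := P) ε₀ hs hsumint
  rw [hset]
  refine h1.trans ?_
  have h2 : mgf (∑ i, Y i) P s ≤ Real.exp (n * (s ^ 2 * (b - a) ^ 2 / 8)) := by
    rw [hindep.mgf_sum hYmeas]
    calc ∏ i : Fin n, mgf (Y i) P s
        ≤ ∏ _i : Fin n, Real.exp (s ^ 2 * (b - a) ^ 2 / 8) := by
          apply Finset.prod_le_prod (fun i _ => mgf_nonneg)
          intro i _
          exact hoeffding_mgf P (Y i) (hYmeas i) a b s (hbound i) (hmean i)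
      _ = Real.exp (n * (s ^ 2 * (b - a) ^ 2 / 8)) := by
          rw [Finset.prod_const, ← Real.exp_nat_mul]
          simp
  calc Real.exp (-s * ε₀) * mgf (∑ i, Y i) P s
      ≤ Real.exp (-s * ε₀) * Real.exp (n * (s ^ 2 * (b - a) ^ 2 / 8)) :=
        mul_le_mul_of_nonneg_left h2 (Real.exp_pos _).le
    _ = Real.exp (-s * ε₀ + n * (s ^ 2 * (b - a) ^ 2 / 8)) := (Real.exp_add _ _).symm

/-- Theorem 1, part 2: if `t ≥ (2/ε²) ln(2/δ)`, then with probability at least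
`1 − δ` the sketch inner product `∑ᵢ x̂ᵢ ŷᵢ` approximates the kernel value
`⟨x, y⟩` up to additive error `ε ‖x‖₁ ‖y‖₁`. -/
theorem sketch_inner_product_approximation
    {A Ω : Type*} [Fintype A] [MeasurableSpace Ω]
    (P : Measure Ω) [IsProbabilityMeasure P]
    (x y : A → ℝ)
    (ε δ : ℝ) (hε : 0 < ε) (hε1 : ε < 1) (hδ : 0 < δ) (hδ1 : δ < 1)
    (t : ℕ) (ht : 0 < t)
    (htbound : (2 / ε ^ 2) * Real.log (2 / δ) ≤ (t : ℝ))
    (h : Fin t → Ω → A → ℝ)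
    (hmeas : ∀ (i : Fin t) (a : A), Measurable (fun ω => h i ω a))
    (hindep : iIndepFun h P)
    (hsq : ∀ (i : Fin t) (a : A), ∀ᵐ ω ∂P, (h i ω a) ^ 2 = 1)
    (huncorr : ∀ (i : Fin t) (a b : A), a ≠ b → ∫ ω, h i ω a * h i ω b ∂P = 0) :
    P {ω | |(∑ i : Fin t,
            ((1 / Real.sqrt t) * ∑ a : A, x a * h i ω a) *
            ((1 / Real.sqrt t) * ∑ a : A, y a * h i ω a))
          - ∑ a : A, x a * y a|
        ≤ ε * (∑ a : A, |x a|) * (∑ a : A, |y a|)}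
      ≥ ENNReal.ofReal (1 - δ) := by
  classical
  have htR : (0:ℝ) < (t:ℝ) := Nat.cast_pos.2 ht
  set K : ℝ := (∑ a : A, |x a|) * (∑ a : A, |y a|) with hKdef
  have hxnn : (0:ℝ) ≤ ∑ a : A, |x a| := Finset.sum_nonneg fun _ _ => abs_nonneg _
  have hynn : (0:ℝ) ≤ ∑ a : A, |y a| := Finset.sum_nonneg fun _ _ => abs_nonneg _
  have hK0 : 0 ≤ K := mul_nonneg hxnn hynn
  set m : ℝ := (∑ a : A, x a * y a) / t with hmdef
  have hst : (1 / Real.sqrt t) * (1 / Real.sqrt t) = 1 / (t:ℝ) := by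
    rw [div_mul_div_comm, one_mul, Real.mul_self_sqrt (Nat.cast_nonneg t)]
  set Y : Fin t → Ω → ℝ := fun i ω =>
    ((1 / Real.sqrt t) * ∑ a : A, x a * h i ω a) *
    ((1 / Real.sqrt t) * ∑ a : A, y a * h i ω a) - m with hYdef
  -- the event coincides with a deviation event for ∑ Y
  have hsumY : ∀ ω, ∑ i : Fin t, Y i ω =
      (∑ i : Fin t,
        ((1 / Real.sqrt t) * ∑ a : A, x a * h i ω a) *
        ((1 / Real.sqrt t) * ∑ a : A, y a * h i ω a)) - ∑ a : A, x a * y a := by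
    intro ω
    simp only [hYdef, Finset.sum_sub_distrib, Finset.sum_const, Finset.card_univ,
      Fintype.card_fin, nsmul_eq_mul]
    congr 1
    rw [hmdef]
    field_simp
  have hEvent : {ω | |(∑ i : Fin t,
            ((1 / Real.sqrt t) * ∑ a : A, x a * h i ω a) *
            ((1 / Real.sqrt t) * ∑ a : A, y a * h i ω a))
          - ∑ a : A, x a * y a|
        ≤ ε * (∑ a : A, |x a|) * (∑ a : A, |y a|)}
      = {ω | |∑ i : Fin t, Y i ω| ≤ ε * K} := by
    ext ω
    rw [Set.mem_setOf_eq, Set.mem_setOf_eq, hsumY ω, hKdef, mul_assoc]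
  rw [hEvent]
  -- measurability
  have hSx : ∀ i, Measurable (fun ω => ∑ a : A, x a * h i ω a) :=
    fun i => Finset.measurable_sum _ fun a _ => (hmeas i a).const_mul (x a)
  have hSy : ∀ i, Measurable (fun ω => ∑ a : A, y a * h i ω a) :=
    fun i => Finset.measurable_sum _ fun a _ => (hmeas i a).const_mul (y a)
  have hYmeas : ∀ i, Measurable (Y i) := by
    intro i
    simp only [hYdef]
    exact (((hSx i).const_mul _).mul ((hSy i).const_mul _)).sub measurable_const
  have hDmeas : Measurable (fun ω => ∑ i : Fin t, Y i ω) :=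
    Finset.measurable_sum _ fun i _ => hYmeas i
  have hEmeas : MeasurableSet {ω | |∑ i : Fin t, Y i ω| ≤ ε * K} :=
    measurableSet_le hDmeas.abs measurable_const
  -- independence
  have hYindep : iIndepFun Y P := by
    have hF : Measurable (fun v : A → ℝ =>
        ((1 / Real.sqrt t) * ∑ a : A, x a * v a) *
        ((1 / Real.sqrt t) * ∑ a : A, y a * v a) - m) := by
      apply Measurable.sub _ measurable_const
      exact ((Finset.measurable_sum _ fun a _ =>
          (by fun_prop : Measurable fun v : A → ℝ => x a * v a)).const_mul _).mul
        ((Finset.measurable_sum _ fun a _ =>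
          (by fun_prop : Measurable fun v : A → ℝ => y a * v a)).const_mul _)
    exact hindep.comp (fun _ => fun v =>
        ((1 / Real.sqrt t) * ∑ a : A, x a * v a) *
        ((1 / Real.sqrt t) * ∑ a : A, y a * v a) - m) (fun _ => hF)
  -- a.s. bounds
  have habs : ∀ i, ∀ᵐ ω ∂P, ∀ a, |h i ω a| = 1 := by
    intro i
    rw [MeasureTheory.ae_all_iff]
    intro a
    filter_upwards [hsq i a] with ω hω
    rw [← Real.sqrt_sq_eq_abs, hω, Real.sqrt_one]
  have hYbound : ∀ i, ∀ᵐ ω ∂P, Y i ω ∈ Set.Icc (-(K / t) - m) (K / t - m) := by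
    intro i
    filter_upwards [habs i] with ω hω
    have hx1 : |∑ a : A, x a * h i ω a| ≤ ∑ a : A, |x a| := by
      refine (Finset.abs_sum_le_sum_abs _ _).trans (le_of_eq ?_)
      apply Finset.sum_congr rfl
      intro a _
      rw [abs_mul, hω a, mul_one]
    have hy1 : |∑ a : A, y a * h i ω a| ≤ ∑ a : A, |y a| := by
      refine (Finset.abs_sum_le_sum_abs _ _).trans (le_of_eq ?_)
      apply Finset.sum_congr rfl
      intro a _
      rw [abs_mul, hω a, mul_one]
    have he : Y i ω + m = (1 / (t:ℝ)) *
        ((∑ a : A, x a * h i ω a) * (∑ a : A, y a * h i ω a)) := by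
      rw [← hst]
      simp only [hYdef]
      ring
    have hZ : |Y i ω + m| ≤ K / t := by
      rw [he, abs_mul, abs_of_nonneg (by positivity : (0:ℝ) ≤ 1 / (t:ℝ)), abs_mul]
      calc 1 / (t:ℝ) * (|∑ a : A, x a * h i ω a| * |∑ a : A, y a * h i ω a|)
          ≤ 1 / (t:ℝ) * ((∑ a : A, |x a|) * (∑ a : A, |y a|)) := by
            apply mul_le_mul_of_nonneg_left _ (by positivity)
            exact mul_le_mul hx1 hy1 (abs_nonneg _) hxnn
        _ = K / t := by rw [hKdef]; ring
    have := abs_le.1 hZ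
    constructor <;> [linarith [this.1]; linarith [this.2]]
  -- zero mean
  have hYmean : ∀ i, ∫ ω, Y i ω ∂P = 0 := by
    intro i
    have hprod_int : ∀ a b : A, Integrable (fun ω => h i ω a * h i ω b) P := by
      intro a b
      refine (integrable_const (1:ℝ)).mono'
        ((hmeas i a).mul (hmeas i b)).aestronglyMeasurable ?_
      filter_upwards [habs i] with ω hω
      rw [Real.norm_eq_abs, abs_mul, hω a, hω b]
      norm_num
    have hterm_int : ∀ a b : A,
        Integrable (fun ω => (x a * y b / t) * (h i ω a * h i ω b)) P :=
      fun a b => (hprod_int a b).const_mul _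
    have hYrw : (fun ω => Y i ω) = fun ω =>
        (∑ a : A, ∑ b : A, (x a * y b / t) * (h i ω a * h i ω b)) - m := by
      funext ω
      simp only [hYdef]
      congr 1
      have he : ((1 / Real.sqrt t) * ∑ a : A, x a * h i ω a) *
          ((1 / Real.sqrt t) * ∑ a : A, y a * h i ω a) = (1 / (t:ℝ)) *
          ((∑ a : A, x a * h i ω a) * (∑ a : A, y a * h i ω a)) := by
        rw [← hst]; ring
      rw [he, Finset.sum_mul_sum, Finset.mul_sum]
      apply Finset.sum_congr rfl
      intro a _
      rw [Finset.mul_sum]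
      apply Finset.sum_congr rfl
      intro b _
      ring
    have hint_val : ∀ a b : A, ∫ ω, h i ω a * h i ω b ∂P = if a = b then 1 else 0 := by
      intro a b
      by_cases hab : a = b
      · subst hab
        simp only [if_pos rfl]
        have hone : (fun ω => h i ω a * h i ω a) =ᵐ[P] fun _ => (1:ℝ) := by
          filter_upwards [hsq i a] with ω hω
          rw [← sq]; exact hω
        rw [integral_congr_ae hone, integral_const]
        simp
      · simp only [if_neg hab]
        exact huncorr i a b hab
    have hsum_int : Integrable
        (fun ω => ∑ a : A, ∑ b : A, (x a * y b / t) * (h i ω a * h i ω b)) P := by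
      apply integrable_finset_sum
      intro a _
      exact integrable_finset_sum _ fun b _ => hterm_int a b
    rw [hYrw, integral_sub hsum_int (integrable_const m), integral_const]
    simp only [measure_univ, probReal_univ, ENNReal.toReal_one, smul_eq_mul, one_mul]
    rw [integral_finset_sum _ fun a _ => integrable_finset_sum _ fun b _ => hterm_int a b]
    have : ∀ a : A, ∫ ω, ∑ b : A, (x a * y b / t) * (h i ω a * h i ω b) ∂P
        = x a * y a / t := by
      intro a
      rw [integral_finset_sum _ fun b _ => hterm_int a b]
      have : ∀ b : A, ∫ ω, (x a * y b / t) * (h i ω a * h i ω b) ∂P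
          = (x a * y b / t) * (if a = b then 1 else 0) := by
        intro b
        rw [MeasureTheory.integral_const_mul, hint_val a b]
      rw [Finset.sum_congr rfl fun b _ => this b]
      simp [Finset.sum_ite_eq, mul_ite]
    rw [Finset.sum_congr rfl fun a _ => this a]
    rw [hmdef, ← Finset.sum_div]
    ring
  -- split on K = 0
  rcases eq_or_lt_of_le hK0 with hK | hK
  · -- K = 0 : the event is everything
    have hall : {ω | |∑ i : Fin t, Y i ω| ≤ ε * K} = Set.univ := by
      apply Set.eq_univ_of_forall
      intro ω
      rw [Set.mem_setOf_eq]
      have hD0 : ∑ i : Fin t, Y i ω = 0 := by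
        rw [hsumY ω]
        rcases mul_eq_zero.1 hK.symm with hx0 | hy0
        · have hx : ∀ a : A, x a = 0 := fun a => abs_eq_zero.1
            ((Finset.sum_eq_zero_iff_of_nonneg
              (fun a _ => abs_nonneg (x a))).1 hx0 a (Finset.mem_univ a))
          simp [hx]
        · have hy : ∀ a : A, y a = 0 := fun a => abs_eq_zero.1
            ((Finset.sum_eq_zero_iff_of_nonneg
              (fun a _ => abs_nonneg (y a))).1 hy0 a (Finset.mem_univ a))
          simp [hy]
      rw [hD0, abs_zero, ← hK]
      positivity
    rw [hall, measure_univ]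
    exact ENNReal.ofReal_le_one.2 (by linarith)
  · -- K > 0 : Chernoff both tails
    set s : ℝ := ε * t / K with hsdef
    have hs : 0 ≤ s := by positivity
    have hε2 : (0:ℝ) < ε ^ 2 := pow_pos hε 2
    have hlogle : Real.log (2 / δ) ≤ ε ^ 2 * t / 2 := by
      rw [div_mul_eq_mul_div] at htbound
      have := (div_le_iff₀ hε2).1 htbound
      linarith
    have hexp2 : Real.exp (-(ε ^ 2 * t / 2)) ≤ δ / 2 := by
      rw [← Real.exp_log (by positivity : (0:ℝ) < δ / 2)]
      apply Real.exp_le_exp.2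
      have hlog2 : Real.log (δ / 2) = - Real.log (2 / δ) := by
        rw [← Real.log_inv]
        congr 1
        rw [inv_div]
      rw [hlog2]
      linarith
    -- upper tail
    have hup := chernoff_sum P t Y hYmeas hYindep (-(K / t) - m) (K / t - m)
      hYbound hYmean (ε * K) s hs
    have hexpval : -s * (ε * K) + (t:ℝ) * (s ^ 2 * ((K / t - m) - (-(K / t) - m)) ^ 2 / 8)
        = -(ε ^ 2 * t / 2) := by
      rw [hsdef]
      field_simp
      ring
    rw [hexpval] at hup
    have hupP : P {ω | ε * K ≤ ∑ i : Fin t, Y i ω} ≤ ENNReal.ofReal (δ / 2) :=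
      (ENNReal.le_ofReal_iff_toReal_le (measure_ne_top _ _) (by positivity)).2
        (hup.trans hexp2)
    -- lower tail
    have hYmeas' : ∀ i, Measurable (fun ω => -(Y i ω)) := fun i => (hYmeas i).neg
    have hYindep' : iIndepFun (fun i ω => -(Y i ω)) P :=
      hYindep.comp (fun _ => fun r : ℝ => -r) (fun _ => measurable_neg)
    have hYbound' : ∀ i, ∀ᵐ ω ∂P, -(Y i ω) ∈ Set.Icc (-(K / t - m)) (K / t + m) := by
      intro i
      filter_upwards [hYbound i] with ω hω
      exact ⟨by simp only [neg_le_neg_iff]; exact hω.2, by linarith [hω.1]⟩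
    have hYmean' : ∀ i, ∫ ω, -(Y i ω) ∂P = 0 := by
      intro i
      rw [integral_neg, hYmean i, neg_zero]
    have hdown := chernoff_sum P t (fun i ω => -(Y i ω)) hYmeas' hYindep'
      (-(K / t - m)) (K / t + m) hYbound' hYmean' (ε * K) s hs
    have hexpval' : -s * (ε * K) + (t:ℝ) * (s ^ 2 * ((K / t + m) - -(K / t - m)) ^ 2 / 8)
        = -(ε ^ 2 * t / 2) := by
      rw [hsdef]
      field_simp
      ring
    rw [hexpval'] at hdown
    have hdownP : P {ω | ε * K ≤ ∑ i : Fin t, -(Y i ω)} ≤ ENNReal.ofReal (δ / 2) :=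
      (ENNReal.le_ofReal_iff_toReal_le (measure_ne_top _ _) (by positivity)).2
        (hdown.trans hexp2)
    -- complement bound
    have hsub : {ω | |∑ i : Fin t, Y i ω| ≤ ε * K}ᶜ ⊆
        {ω | ε * K ≤ ∑ i : Fin t, Y i ω} ∪ {ω | ε * K ≤ ∑ i : Fin t, -(Y i ω)} := by
      intro ω hω
      rw [Set.mem_compl_iff, Set.mem_setOf_eq, not_le] at hω
      rcases lt_abs.1 hω with h1 | h1
      · exact Or.inl (le_of_lt h1)
      · refine Or.inr ?_
        rw [Set.mem_setOf_eq]
        have : ∑ i : Fin t, -(Y i ω) = -∑ i : Fin t, Y i ω := by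
          rw [Finset.sum_neg_distrib]
        rw [this]
        exact le_of_lt h1
    have hcompl : P {ω | |∑ i : Fin t, Y i ω| ≤ ε * K}ᶜ ≤ ENNReal.ofReal δ := by
      calc P {ω | |∑ i : Fin t, Y i ω| ≤ ε * K}ᶜ
          ≤ P ({ω | ε * K ≤ ∑ i : Fin t, Y i ω} ∪ {ω | ε * K ≤ ∑ i : Fin t, -(Y i ω)}) :=
            measure_mono hsub
        _ ≤ P {ω | ε * K ≤ ∑ i : Fin t, Y i ω} + P {ω | ε * K ≤ ∑ i : Fin t, -(Y i ω)} :=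
            measure_union_le _ _
        _ ≤ ENNReal.ofReal (δ / 2) + ENNReal.ofReal (δ / 2) := add_le_add hupP hdownP
        _ = ENNReal.ofReal δ := by
            rw [← ENNReal.ofReal_add (by positivity) (by positivity)]
            norm_num
    have hPE : P {ω | |∑ i : Fin t, Y i ω| ≤ ε * K}
        = 1 - P {ω | |∑ i : Fin t, Y i ω| ≤ ε * K}ᶜ := by
      have hadd := prob_add_prob_compl (μ := P) hEmeas
      rw [← hadd]
      exact (ENNReal.add_sub_cancel_right (measure_ne_top _ _)).symm
    rw [ge_iff_le, hPE]
    calc ENNReal.ofReal (1 - δ) = 1 - ENNReal.ofReal δ := by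
          rw [ENNReal.ofReal_sub _ hδ.le, ENNReal.ofReal_one]
      _ ≤ 1 - P {ω | |∑ i : Fin t, Y i ω| ≤ ε * K}ᶜ := tsub_le_tsub_left hcompl 1
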